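/- With p_n(x) = (−1)^n e^x A^n(e^{−x}), the generating function identity exp(−2x·sinh²(y/2)) = Σ_{n=0}^∞ p_n(x)·y^{2n}/(2n)! holds for all x ∈ ℝ and all y in a neighborhood of 0 (the series has positive radius of convergence in y). -/

import Mathlib

open Real

/-- The operator `(A f)(x) = x² f(x) − x (x f′(x))′`. -/
noncomputable def opA (f : ℝ → ℝ) : ℝ → ℝ :=
  fun x => x^2 * f x - x * deriv (fun y => y * deriv f y) x

/-- `p_n(x) = (−1)^n e^x (Aⁿ e^{−x})(x)`. -/
noncomputable def p (n : ℕ) (x : ℝ) : ℝ :=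
  (-1:ℝ)^n * Real.exp x * (opA^[n] (fun y => Real.exp (-y))) x


open MvPolynomial

abbrev R3 := MvPolynomial (Fin 3) ℝ

noncomputable def Dy (q : R3) : R3 :=
  X 2 * pderiv 1 q + X 1 * pderiv 2 q - X 0 * X 2 * q

noncomputable def Dx (q : R3) : R3 := pderiv 0 q + (1 - X 1) * q

noncomputable def Bp (q : R3) : R3 :=
  X 0 ^ 2 * Dx (Dx q) + (X 0 - 2 * X 0 ^ 2) * Dx q - X 0 * q

noncomputable def fI : R3 := X 1 ^ 2 - X 2 ^ 2 - 1

lemma pd_comm (i j : Fin 3) (q : R3) :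
    pderiv i (pderiv j q) = pderiv j (pderiv i q) := by
  induction q using MvPolynomial.induction_on with
  | C a => simp
  | add p q hp hq => simp [map_add, hp, hq]
  | mul_X p n hp =>
    have key : ∀ k l : Fin 3, pderiv k (pderiv l (X n : R3)) = 0 := by
      intro k l
      rcases eq_or_ne n l with rfl | h
      · rw [pderiv_X_self]; exact pderiv_one
      · rw [pderiv_X_of_ne h]; simp
    simp only [pderiv_mul, map_add, hp, key]
    ring

lemma pdX (k l : Fin 3) : pderiv k (X l : R3) = if k = l then 1 else 0 := by
  rcases eq_or_ne k l with rfl | h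
  · simp [pderiv_X_self]
  · rw [pderiv_X_of_ne h.symm, if_neg h]

lemma Dx_Dy_comm (q : R3) : Dx (Dy q) = Dy (Dx q) := by
  simp only [Dx, Dy, map_add, map_sub, map_mul, pderiv_mul, pdX, pderiv_one,
    map_one, pd_comm 0 1 q, pd_comm 0 2 q,
    if_neg (by decide : ¬ (0:Fin 3) = 2), if_neg (by decide : ¬ (2:Fin 3) = 1),
    if_neg (by decide : ¬ (0:Fin 3) = 1), if_true]
  ring

lemma Dy_fI_mul (q : R3) : Dy (fI * q) = fI * Dy q := by
  simp only [Dy, fI, map_sub, map_mul, pderiv_mul, map_one, pderiv_one, pderiv_pow,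
    pdX, if_neg (by decide : ¬ (1:Fin 3) = 2), if_neg (by decide : ¬ (2:Fin 3) = 1), if_true]
  ring

lemma Dx_fI_mul (q : R3) : Dx (fI * q) = fI * Dx q := by
  simp only [Dx, fI, map_sub, map_mul, pderiv_mul, map_one, pderiv_one, pderiv_pow,
    pdX, if_neg (by decide : ¬ (0:Fin 3) = 2), if_neg (by decide : ¬ (0:Fin 3) = 1), if_true]
  ring

lemma Bp_fI_mul (q : R3) : Bp (fI * q) = fI * Bp q := by
  simp only [Bp, Dx_fI_mul]; ring

lemma Dy_x_mul (a q : R3) (ha1 : pderiv 1 a = 0) (ha2 : pderiv 2 a = 0) :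
    Dy (a * q) = a * Dy q := by
  simp only [Dy, pderiv_mul, ha1, ha2]; ring

lemma pd_two (i : Fin 3) : pderiv i (2 : R3) = 0 := by
  rw [show (2:R3) = 1 + 1 by norm_num, map_add, pderiv_one]; ring

lemma Dy_add (a b : R3) : Dy (a + b) = Dy a + Dy b := by
  simp only [Dy, map_add]; ring

lemma Dy_sub (a b : R3) : Dy (a - b) = Dy a - Dy b := by
  simp only [Dy, map_sub]; ring

lemma Dy_Bp_comm (q : R3) : Dy (Bp q) = Bp (Dy q) := by
  have h1 : ∀ k : ℕ, pderiv (1 : Fin 3) ((X 0 : R3) ^ k) = 0 := by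
    intro k; rw [pderiv_pow, pderiv_X_of_ne (by decide)]; ring
  have h2 : ∀ k : ℕ, pderiv (2 : Fin 3) ((X 0 : R3) ^ k) = 0 := by
    intro k; rw [pderiv_pow, pderiv_X_of_ne (by decide)]; ring
  have hx1 : pderiv (1 : Fin 3) (X 0 : R3) = 0 := pderiv_X_of_ne (by decide)
  have hx2 : pderiv (2 : Fin 3) (X 0 : R3) = 0 := pderiv_X_of_ne (by decide)
  simp only [Bp]
  rw [Dy_sub, Dy_add,
    Dy_x_mul ((X 0)^2) _ (h1 2) (h2 2),
    Dy_x_mul (X 0 - 2 * X 0 ^ 2) _ (by rw [map_sub, pderiv_mul, h1 2, hx1, pd_two]; ring)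
      (by rw [map_sub, pderiv_mul, h2 2, hx2, pd_two]; ring),
    Dy_x_mul (X 0) _ hx1 hx2, Dx_Dy_comm, Dx_Dy_comm]

lemma DyDy_one : Dy (Dy (1 : R3)) = Bp 1 - X 0 ^ 2 * fI := by
  simp only [Dy, Dx, Bp, fI, map_sub, map_mul, pderiv_mul, map_one, pderiv_one, mul_one,
    map_zero, zero_add, add_zero, mul_zero, zero_mul,
    pdX, if_neg (by decide : ¬ (1:Fin 3) = 0), if_neg (by decide : ¬ (2:Fin 3) = 0),
    if_neg (by decide : ¬ (1:Fin 3) = 2), if_neg (by decide : ¬ (2:Fin 3) = 1),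
    if_neg (by decide : ¬ (0:Fin 3) = 1), if_neg (by decide : ¬ (0:Fin 3) = 2), if_true]
  ring

lemma Bp_iter_fI (n : ℕ) (u : R3) : Bp^[n] (fI * u) = fI * Bp^[n] u := by
  induction n generalizing u with
  | zero => rfl
  | succ n ih => rw [Function.iterate_succ_apply, Bp_fI_mul, ih,
      ← Function.iterate_succ_apply]

lemma DyDy_Bp_iter (n : ℕ) (u : R3) : Dy (Dy (Bp^[n] u)) = Bp^[n] (Dy (Dy u)) := by
  induction n generalizing u with
  | zero => rfl
  | succ n ih => rw [Function.iterate_succ_apply, ih, Dy_Bp_comm, Dy_Bp_comm,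
      Function.iterate_succ_apply]

lemma Dx_sub (a b : R3) : Dx (a - b) = Dx a - Dx b := by
  simp only [Dx, map_sub]; ring

lemma Bp_sub (a b : R3) : Bp (a - b) = Bp a - Bp b := by
  simp only [Bp, Dx_sub]; ring

lemma Bp_iter_sub (n : ℕ) (a b : R3) : Bp^[n] (a - b) = Bp^[n] a - Bp^[n] b := by
  induction n generalizing a b with
  | zero => rfl
  | succ n ih => rw [Function.iterate_succ_apply, Bp_sub, ih,
      Function.iterate_succ_apply, Function.iterate_succ_apply]

lemma key_alg (n : ℕ) : ∃ w : R3, Dy^[2 * n] 1 = Bp^[n] 1 + fI * w := by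
  induction n with
  | zero => exact ⟨0, by simp⟩
  | succ n ih =>
    obtain ⟨w, hw⟩ := ih
    refine ⟨Dy (Dy w) - Bp^[n] (X 0 ^ 2), ?_⟩
    have h2 : 2 * (n + 1) = (2 * n) + 1 + 1 := by ring
    rw [h2, Function.iterate_succ_apply', Function.iterate_succ_apply', hw,
      Dy_add, Dy_add, Dy_fI_mul, Dy_fI_mul, DyDy_Bp_iter, DyDy_one, Bp_iter_sub,
      show (X 0 ^ 2 * fI : R3) = fI * X 0 ^ 2 by ring, Bp_iter_fI,
      Function.iterate_succ_apply]
    ring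

open Polynomial in
noncomputable def Bone (r : Polynomial ℝ) : Polynomial ℝ :=
  Polynomial.X ^ 2 * derivative (derivative r) + (Polynomial.X - 2 * Polynomial.X ^ 2) * derivative r
    - Polynomial.X * r

noncomputable def phi3 : R3 →ₐ[ℝ] Polynomial ℝ := aeval ![Polynomial.X, 1, 0]

@[simp] lemma phi3_X0 : phi3 (X 0) = Polynomial.X := by simp [phi3]
@[simp] lemma phi3_X1 : phi3 (X 1) = 1 := by simp [phi3]
@[simp] lemma phi3_X2 : phi3 (X 2) = 0 := by simp [phi3]
@[simp] lemma phi3_C (a : ℝ) : phi3 (C a) = Polynomial.C a := by simp [phi3]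

lemma phi3_pderiv0 (q : R3) : phi3 (pderiv 0 q) = Polynomial.derivative (phi3 q) := by
  induction q using MvPolynomial.induction_on with
  | C a => simp
  | add p q hp hq => simp [map_add, hp, hq]
  | mul_X p n hp =>
    fin_cases n <;>
      simp [pderiv_mul, pdX, map_add, map_mul, hp, Polynomial.derivative_mul] <;> ring

lemma phi3_Dx (q : R3) : phi3 (Dx q) = Polynomial.derivative (phi3 q) := by
  simp [Dx, map_add, map_mul, map_sub, phi3_pderiv0]

lemma phi3_Bp (q : R3) : phi3 (Bp q) = Bone (phi3 q) := by
  simp only [Bp, Bone, map_add, map_sub, map_mul, phi3_Dx, map_pow, map_ofNat, phi3_X0]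

lemma phi3_fI : phi3 fI = 0 := by
  simp [fI, map_sub, map_pow]

lemma phi3_Bp_iter (n : ℕ) (q : R3) : phi3 (Bp^[n] q) = Bone^[n] (phi3 q) := by
  induction n generalizing q with
  | zero => rfl
  | succ n ih => rw [Function.iterate_succ_apply, ih, phi3_Bp,
      Function.iterate_succ_apply]

lemma eval_phi3 (q : R3) (x : ℝ) :
    MvPolynomial.eval ![x, 1, 0] q = (phi3 q).eval x := by
  induction q using MvPolynomial.induction_on with
  | C a => simp
  | add p q hp hq => simp [map_add, hp, hq]
  | mul_X p n hp => fin_cases n <;> simp [map_mul, hp]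

lemma eval10_Dy_iter (n : ℕ) (x : ℝ) :
    MvPolynomial.eval ![x, 1, 0] (Dy^[2 * n] 1) = (Bone^[n] 1).eval x := by
  obtain ⟨w, hw⟩ := key_alg n
  rw [hw, eval_phi3, map_add, map_mul, phi3_fI, phi3_Bp_iter, map_one]
  simp

open Real

noncomputable def pathv (x t : ℝ) : Fin 3 → ℝ := ![x, Real.cosh t, Real.sinh t]

lemma hasDerivAt_eval_path (x : ℝ) (q : R3) (y : ℝ) :
    HasDerivAt (fun t => MvPolynomial.eval (pathv x t) q)
      (MvPolynomial.eval (pathv x y) (X 2 * pderiv 1 q + X 1 * pderiv 2 q)) y := by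
  induction q using MvPolynomial.induction_on with
  | C a => simpa using hasDerivAt_const y a
  | add p q hp hq =>
    simp only [map_add, mul_add]
    refine (hp.add hq).congr_deriv ?_
    simp only [map_add, mul_add]; ring
  | mul_X p n hp =>
    fin_cases n
    · show HasDerivAt (fun t => MvPolynomial.eval (pathv x t) (p * X 0))
          (MvPolynomial.eval (pathv x y)
            (X 2 * pderiv 1 (p * X 0) + X 1 * pderiv 2 (p * X 0))) y
      have hfun : (fun t => MvPolynomial.eval (pathv x t) (p * X 0)) =
          fun t => MvPolynomial.eval (pathv x t) p * x := by
        funext t; simp [pathv]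
      rw [hfun]
      refine (hp.mul_const x).congr_deriv ?_
      simp only [pderiv_mul, pdX, map_add, map_mul, MvPolynomial.eval_add,
        MvPolynomial.eval_mul, if_neg (by decide : ¬ (1:Fin 3) = 0),
        if_neg (by decide : ¬ (2:Fin 3) = 0), MvPolynomial.eval_X]
      simp [pathv]; ring
    · show HasDerivAt (fun t => MvPolynomial.eval (pathv x t) (p * X 1))
          (MvPolynomial.eval (pathv x y)
            (X 2 * pderiv 1 (p * X 1) + X 1 * pderiv 2 (p * X 1))) y
      have hfun : (fun t => MvPolynomial.eval (pathv x t) (p * X 1)) =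
          fun t => MvPolynomial.eval (pathv x t) p * Real.cosh t := by
        funext t; simp [pathv]
      rw [hfun]
      refine (hp.mul (Real.hasDerivAt_cosh y)).congr_deriv ?_
      simp only [pderiv_mul, pdX, map_add, map_mul, MvPolynomial.eval_add,
        MvPolynomial.eval_mul, if_true, if_neg (by decide : ¬ (2:Fin 3) = 1), MvPolynomial.eval_X]
      simp [pathv]; ring
    · show HasDerivAt (fun t => MvPolynomial.eval (pathv x t) (p * X 2))
          (MvPolynomial.eval (pathv x y)
            (X 2 * pderiv 1 (p * X 2) + X 1 * pderiv 2 (p * X 2))) y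
      have hfun : (fun t => MvPolynomial.eval (pathv x t) (p * X 2)) =
          fun t => MvPolynomial.eval (pathv x t) p * Real.sinh t := by
        funext t; simp [pathv]
      rw [hfun]
      refine (hp.mul (Real.hasDerivAt_sinh y)).congr_deriv ?_
      simp only [pderiv_mul, pdX, map_add, map_mul, MvPolynomial.eval_add,
        MvPolynomial.eval_mul, if_true, if_neg (by decide : ¬ (1:Fin 3) = 2), MvPolynomial.eval_X]
      simp [pathv]; ring

lemma hasDerivAt_expg (x z : ℝ) :
    HasDerivAt (fun t => Real.exp (x * (1 - Real.cosh t)))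
      (-(x * Real.sinh z) * Real.exp (x * (1 - Real.cosh z))) z := by
  have hinner : HasDerivAt (fun t => x * (1 - Real.cosh t)) (x * -Real.sinh z) z :=
    ((Real.hasDerivAt_cosh z).const_sub 1).const_mul x
  have h := (Real.hasDerivAt_exp (x * (1 - Real.cosh z))).comp z hinner
  exact h.congr_deriv (by ring)

lemma iter_deriv_g (x : ℝ) (k : ℕ) :
    iteratedDeriv k (fun t => Real.exp (x * (1 - Real.cosh t))) = fun y =>
      MvPolynomial.eval (pathv x y) (Dy^[k] 1) * Real.exp (x * (1 - Real.cosh y)) := by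
  induction k with
  | zero => funext y; simp
  | succ k ih =>
    funext y
    rw [iteratedDeriv_succ, ih, Function.iterate_succ_apply']
    have h := (hasDerivAt_eval_path x (Dy^[k] 1) y).mul (hasDerivAt_expg x y)
    rw [HasDerivAt.deriv (f := fun y => MvPolynomial.eval (pathv x y) (Dy^[k] 1) * Real.exp (x * (1 - Real.cosh y))) h]
    simp only [Dy, map_sub, map_add, MvPolynomial.eval_mul, MvPolynomial.eval_X,
      MvPolynomial.eval_sub, MvPolynomial.eval_add]
    have h0 : pathv x y 0 = x := rfl
    have h2 : pathv x y 2 = Real.sinh y := rfl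
    rw [h0, h2]
    ring

noncomputable def opA' (f : ℝ → ℝ) : ℝ → ℝ :=
  fun x => x^2 * f x - x * deriv (fun y => y * deriv f y) x

lemma hasDerivAt_exp_neg_mul_poly (r : Polynomial ℝ) (t : ℝ) :
    HasDerivAt (fun s => Real.exp (-s) * r.eval s)
      (Real.exp (-t) * ((Polynomial.derivative r).eval t - r.eval t)) t := by
  have he : HasDerivAt (fun s : ℝ => Real.exp (-s)) (-Real.exp (-t)) t := by
    exact ((Real.hasDerivAt_exp (-t)).comp t (hasDerivAt_neg t)).congr_deriv (by ring)
  have h := he.mul (r.hasDerivAt t)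
  exact h.congr_deriv (by ring)

lemma deriv_exp_neg_mul_poly (r : Polynomial ℝ) :
    deriv (fun s => Real.exp (-s) * r.eval s) =
      fun t => Real.exp (-t) * ((Polynomial.derivative r).eval t - r.eval t) :=
  funext fun t => (hasDerivAt_exp_neg_mul_poly r t).deriv

lemma opA'_exp_poly (r : Polynomial ℝ) :
    opA' (fun t => Real.exp (-t) * r.eval t) =
      fun t => -(Real.exp (-t) * (Bone r).eval t) := by
  funext t
  unfold opA'
  rw [deriv_exp_neg_mul_poly]
  have hfun : (fun y : ℝ => y * (Real.exp (-y) * ((Polynomial.derivative r).eval y - r.eval y)))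
      = fun y : ℝ => y * (Real.exp (-y) * (Polynomial.derivative r - r).eval y) := by
    funext y; simp [Polynomial.eval_sub]
  rw [hfun]
  have h2 := (hasDerivAt_id t).mul (hasDerivAt_exp_neg_mul_poly (Polynomial.derivative r - r) t)
  simp only [id_eq] at h2
  rw [HasDerivAt.deriv (f := fun y : ℝ => y * (Real.exp (-y) * (Polynomial.derivative r - r).eval y)) h2]
  simp only [Bone, Polynomial.eval_sub, Polynomial.eval_add, Polynomial.eval_mul,
    Polynomial.eval_pow, Polynomial.eval_X, Polynomial.eval_ofNat, map_sub, id_eq]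
  ring

lemma opA'_const_mul (c : ℝ) (f : ℝ → ℝ) :
    opA' (fun t => c * f t) = fun t => c * opA' f t := by
  funext t
  unfold opA'
  have hd : deriv (fun y => c * f y) = fun y => c * deriv f y :=
    funext fun y => deriv_const_mul_field c
  rw [hd]
  have : (fun y : ℝ => y * (c * deriv f y)) = fun y : ℝ => c * (y * deriv f y) := by
    funext y; ring
  rw [this, deriv_const_mul_field c]
  ring

lemma opA'_iter (n : ℕ) : opA'^[n] (fun t => Real.exp (-t)) =
    fun t => (-1 : ℝ)^n * (Real.exp (-t) * (Bone^[n] 1).eval t) := by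
  induction n with
  | zero => funext t; simp
  | succ n ih =>
    rw [Function.iterate_succ_apply', ih]
    have h1 : (fun t => (-1 : ℝ)^n * (Real.exp (-t) * (Bone^[n] 1).eval t)) =
        fun t => (-1:ℝ)^n * ((fun s => Real.exp (-s) * (Bone^[n] 1).eval s) t) := rfl
    rw [h1, opA'_const_mul, opA'_exp_poly]
    funext t
    rw [Function.iterate_succ_apply']
    ring

lemma p_eq (n : ℕ) (x : ℝ) : p n x = (Bone^[n] 1).eval x := by
  have hAA : opA = opA' := rfl
  unfold p
  rw [hAA, opA'_iter n]
  have h1 : Real.exp x * Real.exp (-x) = 1 := by rw [← Real.exp_add]; simp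
  have h2 : ((-1:ℝ)^n) * ((-1:ℝ)^n) = 1 := by
    rw [← pow_add]; exact Even.neg_one_pow ⟨n, rfl⟩
  calc (-1:ℝ)^n * Real.exp x * ((-1:ℝ)^n * (Real.exp (-x) * (Bone^[n] 1).eval x))
      = (((-1:ℝ)^n) * ((-1:ℝ)^n)) * (Real.exp x * Real.exp (-x)) * (Bone^[n] 1).eval x := by ring
    _ = (Bone^[n] 1).eval x := by rw [h1, h2]; ring

/-- Generating function: `exp(−2x sinh²(y/2)) = Σ p_n(x) y^{2n}/(2n)!` for `y` near `0`. -/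
theorem p_generating_function (x : ℝ) :
    ∃ r : ℝ, 0 < r ∧ ∀ y : ℝ, |y| < r →
      HasSum (fun n : ℕ => p n x * y^(2*n) / (2*n).factorial)
        (Real.exp (-2 * x * (Real.sinh (y/2))^2)) := by
  set g : ℝ → ℝ := fun y => Real.exp (x * (1 - Real.cosh y)) with hgdef
  have hcosh : AnalyticAt ℝ Real.cosh 0 := by
    have h : AnalyticAt ℝ (fun y : ℝ => (Real.exp y + Real.exp (-y)) / 2) 0 := by
      simp only [div_eq_mul_inv]
      exact (analyticAt_rexp.add (analyticAt_rexp.comp analyticAt_id.neg)).mul analyticAt_const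
    have hc : Real.cosh = fun y : ℝ => (Real.exp y + Real.exp (-y)) / 2 :=
      funext fun y => Real.cosh_eq y
    rw [hc]; exact h
  have hg : AnalyticAt ℝ g 0 :=
    analyticAt_rexp.comp (analyticAt_const.mul (analyticAt_const.sub hcosh))
  obtain ⟨ps, hps⟩ := hg
  obtain ⟨r, hr⟩ := hps
  obtain ⟨ε, hε0, hεr⟩ := ENNReal.lt_iff_exists_nnreal_btwn.mp hr.r_pos
  refine ⟨ε, by exact_mod_cast hε0, ?_⟩
  intro y hy
  have hmem : y ∈ Metric.eball (0:ℝ) r := by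
    rw [EMetric.mem_ball, edist_dist, Real.dist_0_eq_abs]
    calc ENNReal.ofReal |y| < ENNReal.ofReal ε := by
          rw [ENNReal.ofReal_lt_ofReal_iff (by exact_mod_cast hε0)]; exact hy
      _ = (↑ε : ENNReal) := ENNReal.ofReal_coe_nnreal
      _ < r := hεr
  have hsum := hr.hasSum_iteratedFDeriv hmem
  simp only [zero_add] at hsum
  have hF : (fun k : ℕ => (k.factorial : ℝ)⁻¹ • iteratedFDeriv ℝ k g 0 fun _ => y) =
      fun k : ℕ => (k.factorial : ℝ)⁻¹ * iteratedDeriv k g 0 * y ^ k := by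
    funext k
    rw [iteratedFDeriv_apply_eq_iteratedDeriv_mul_prod]
    simp [smul_eq_mul]
    ring
  rw [hF] at hsum
  have hiter : ∀ k, iteratedDeriv k g 0 = MvPolynomial.eval ![x, 1, 0] (Dy^[k] 1) := by
    intro k
    have h0 := congrFun (iter_deriv_g x k) 0
    have hp0 : pathv x 0 = ![x, (1:ℝ), 0] := by
      unfold pathv; rw [Real.cosh_zero, Real.sinh_zero]
    rw [hgdef, h0, hp0, Real.cosh_zero]
    simp
  have hodd : ∀ k, Odd k → iteratedDeriv k g 0 = 0 := by
    intro k hk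
    have hgev : (fun t => g (-t)) = g := funext fun t => by simp [hgdef, Real.cosh_neg]
    have hcn := iteratedDeriv_comp_neg k g 0
    rw [hgev, neg_zero, hk.neg_one_pow] at hcn
    simp only [smul_eq_mul, neg_one_mul] at hcn
    linarith [hcn]
  have hinj : Function.Injective (fun n : ℕ => 2 * n) := fun a b h => by
    simpa using h
  have hsupp : ∀ k ∉ Set.range (fun n : ℕ => 2 * n),
      (k.factorial : ℝ)⁻¹ * iteratedDeriv k g 0 * y ^ k = 0 := by
    intro k hk
    have hodd' : Odd k := by simpa [Set.mem_range] using hk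
    rw [hodd k hodd']; ring
  have h2 := (hinj.hasSum_iff hsupp).mpr hsum
  have hyval : g y = Real.exp (-2 * x * Real.sinh (y/2) ^ 2) := by
    have hch : Real.cosh y = 2 * Real.sinh (y/2) ^ 2 + 1 := by
      rw [show y = 2 * (y/2) by ring, Real.cosh_two_mul, Real.cosh_sq]
      ring
    rw [hgdef]
    simp only []
    rw [hch]
    congr 1
    ring
  rw [← hyval]
  convert h2 using 1
  funext n
  simp only [Function.comp_apply]
  rw [hiter, eval10_Dy_iter, ← p_eq]
  rw [div_eq_mul_inv]
  ring
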